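/- arXiv:math/0002014 — 2 statements merged into one kernel-verified Lean document; each statement's English description precedes it below -/
import Mathlib

section
/- For R a commutative k-algebra and n ≥ 1, D^m_k(M_n(R)) = M_{n²}(D^m_k(R)) for every m ≥ 0, and hence D_k(M_n(R)) = M_{n²}(D_k(R)). -/
open MulOpposite

instance (priority := 900) smulCommSelf' {k A : Type*} [CommSemiring k] [Semiring A]
    [Algebra k A] : SMulCommClass A k A := SMulCommClass.symm k A A

variable (k : Type*) [Field k]
variable (A : Type*) [Ring A] [Algebra k A]
variable (L : Type*) [AddCommGroup L] [Module k L] [Module A L] [SMulCommClass A k L]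

/-- Left action of `A` on `L` as a `k`-linear endomorphism. -/
def lop (a : A) : L →ₗ[k] L where
  toFun x := a • x
  map_add' := smul_add a
  map_smul' c x := smul_comm a c x

/-- The `A`-sub-bimodule (as an additive subgroup closed under both actions)
generated by a set of operators. -/
def genBi (T : Set (L →ₗ[k] L)) : AddSubgroup (L →ₗ[k] L) :=
  AddSubgroup.closure {ψ | ∃ a b : A, ∃ t ∈ T, ψ = (lop k A L a).comp (t.comp (lop k A L b))}

/-- The Lunts–Rosenberg filtration of differential operators on the left `A`-module `L`:
`Dfil 0` is the sub-bimodule generated by the central elements of `Hom_k(L,L)`, and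
`Dfil (m+1)` is the sub-bimodule generated by operators whose commutators with `A`
lie in `Dfil m`. -/
def Dfil : ℕ → AddSubgroup (L →ₗ[k] L)
  | 0 => genBi k A L {φ | ∀ a : A, (lop k A L a).comp φ = φ.comp (lop k A L a)}
  | (m+1) => genBi k A L {φ | ∀ a : A, (lop k A L a).comp φ - φ.comp (lop k A L a) ∈ Dfil m}

/-- The ring of differential operators: union of the filtration. -/
def Ddiff : Set (L →ₗ[k] L) := ⋃ m, (Dfil k A L m : Set (L →ₗ[k] L))

/-! ### General lemmas about `lop`, `genBi`, `Dfil` -/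

@[simp] lemma lop_apply (a : A) (x : L) : lop k A L a x = a • x := rfl

variable {k A L}

lemma Dfil_zero : Dfil k A L 0 =
    genBi k A L {φ | ∀ a : A, (lop k A L a).comp φ = φ.comp (lop k A L a)} := rfl

lemma Dfil_succ (m : ℕ) : Dfil k A L (m+1) =
    genBi k A L {φ | ∀ a : A, (lop k A L a).comp φ - φ.comp (lop k A L a) ∈ Dfil k A L m} := rfl

lemma mem_genBi_of_mem {T : Set (L →ₗ[k] L)} {t : L →ₗ[k] L} (ht : t ∈ T) (a b : A) :
    (lop k A L a).comp (t.comp (lop k A L b)) ∈ genBi k A L T :=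
  AddSubgroup.subset_closure ⟨a, b, t, ht, rfl⟩

lemma mem_genBi_self {T : Set (L →ₗ[k] L)} {t : L →ₗ[k] L} (ht : t ∈ T) :
    t ∈ genBi k A L T := by
  have h := mem_genBi_of_mem ht (1 : A) (1 : A)
  have e : (lop k A L (1 : A)).comp (t.comp (lop k A L (1 : A))) = t := by
    ext x; simp
  rwa [e] at h

/-- Induction principle for membership in `genBi`. -/
lemma genBi_induction {T : Set (L →ₗ[k] L)} {P : (L →ₗ[k] L) → Prop}
    (mem : ∀ (a b : A) (t : L →ₗ[k] L), t ∈ T → P ((lop k A L a).comp (t.comp (lop k A L b))))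
    (zero : P 0) (add : ∀ x y, P x → P y → P (x + y)) (neg : ∀ x, P x → P (-x))
    (φ : L →ₗ[k] L) (hφ : φ ∈ genBi k A L T) : P φ := by
  have hφ' : φ ∈ AddSubgroup.closure
      {ψ | ∃ a b : A, ∃ t ∈ T, ψ = (lop k A L a).comp (t.comp (lop k A L b))} := hφ
  clear hφ
  induction hφ' using AddSubgroup.closure_induction with
  | mem x hx => obtain ⟨a, b, t, ht, rfl⟩ := hx; exact mem a b t ht
  | zero => exact zero
  | add x y _ _ hx hy => exact add x y hx hy
  | neg x _ hx => exact neg x hx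

lemma genBi_conj {T : Set (L →ₗ[k] L)} {φ : L →ₗ[k] L} (hφ : φ ∈ genBi k A L T) (a b : A) :
    (lop k A L a).comp (φ.comp (lop k A L b)) ∈ genBi k A L T := by
  refine genBi_induction
    (P := fun ψ => (lop k A L a).comp (ψ.comp (lop k A L b)) ∈ genBi k A L T) ?_ ?_ ?_ ?_ φ hφ
  · intro a' b' t ht
    have h : (lop k A L a).comp (((lop k A L a').comp (t.comp (lop k A L b'))).comp (lop k A L b))
        = (lop k A L (a * a')).comp (t.comp (lop k A L (b' * b))) := by
      ext x; simp [mul_smul]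
    rw [h]; exact mem_genBi_of_mem ht _ _
  · simpa using zero_mem _
  · intro x y hx hy
    simpa [LinearMap.comp_add, LinearMap.add_comp] using add_mem hx hy
  · intro x hx
    simpa [LinearMap.comp_neg, LinearMap.neg_comp] using neg_mem hx

lemma Dfil_conj {m : ℕ} {φ : L →ₗ[k] L} (hφ : φ ∈ Dfil k A L m) (a b : A) :
    (lop k A L a).comp (φ.comp (lop k A L b)) ∈ Dfil k A L m := by
  cases m with
  | zero => exact genBi_conj hφ a b
  | succ m => exact genBi_conj hφ a b

lemma genBi_comp {T T' : Set (L →ₗ[k] L)} {z : L →ₗ[k] L}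
    (hz : ∀ a : A, (lop k A L a).comp z = z.comp (lop k A L a))
    (hT : ∀ t ∈ T, t.comp z ∈ T')
    {φ : L →ₗ[k] L} (hφ : φ ∈ genBi k A L T) : φ.comp z ∈ genBi k A L T' := by
  refine genBi_induction (P := fun ψ => ψ.comp z ∈ genBi k A L T') ?_ ?_ ?_ ?_ φ hφ
  · intro a b t ht
    have hzb : ∀ x, b • z x = z (b • x) := fun x =>
      congrFun (congrArg DFunLike.coe (hz b)) x
    have h : ((lop k A L a).comp (t.comp (lop k A L b))).comp z
        = (lop k A L a).comp ((t.comp z).comp (lop k A L b)) := by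
      ext x; simp [hzb x]
    rw [h]; exact mem_genBi_of_mem (hT t ht) a b
  · simpa using zero_mem _
  · intro x y hx hy
    simpa [LinearMap.add_comp] using add_mem hx hy
  · intro x hx
    simpa [LinearMap.neg_comp] using neg_mem hx

/-- `Dfil m` is stable under right composition with a central operator. -/
lemma Dfil_comp_central (m : ℕ) {z : L →ₗ[k] L}
    (hz : ∀ a : A, (lop k A L a).comp z = z.comp (lop k A L a))
    {φ : L →ₗ[k] L} (hφ : φ ∈ Dfil k A L m) : φ.comp z ∈ Dfil k A L m := by
  induction m generalizing φ with
  | zero =>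
      rw [Dfil_zero] at hφ ⊢
      refine genBi_comp hz ?_ hφ
      intro t ht a
      have hta : ∀ y, a • t y = t (a • y) := fun y =>
        congrFun (congrArg DFunLike.coe (ht a)) y
      have hza : ∀ x, a • z x = z (a • x) := fun x =>
        congrFun (congrArg DFunLike.coe (hz a)) x
      ext x
      simp only [LinearMap.comp_apply, lop_apply]
      rw [hta, hza]
  | succ m ih =>
      rw [Dfil_succ] at hφ ⊢
      refine genBi_comp hz ?_ hφ
      intro t ht a
      have hza : ∀ x, a • z x = z (a • x) := fun x =>
        congrFun (congrArg DFunLike.coe (hz a)) x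
      have h : (lop k A L a).comp (t.comp z) - (t.comp z).comp (lop k A L a)
          = ((lop k A L a).comp t - t.comp (lop k A L a)).comp z := by
        ext x
        simp only [LinearMap.sub_apply, LinearMap.comp_apply, lop_apply]
        rw [hza x]
      rw [h]
      exact ih (ht a)

lemma genBi_mono {T T' : Set (L →ₗ[k] L)} (h : T ⊆ T') : genBi k A L T ≤ genBi k A L T' :=
  AddSubgroup.closure_mono (fun ψ hψ => by
    obtain ⟨a, b, t, ht, rfl⟩ := hψ
    exact ⟨a, b, t, h ht, rfl⟩)

lemma Dfil_mono (m : ℕ) : Dfil k A L m ≤ Dfil k A L (m+1) := by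
  induction m with
  | zero =>
      rw [Dfil_zero, Dfil_succ]
      apply genBi_mono
      intro t ht a
      simp only [Set.mem_setOf_eq] at ht ⊢
      rw [ht a, sub_self]
      exact zero_mem _
  | succ m ih =>
      rw [Dfil_succ, Dfil_succ (m+1)]
      apply genBi_mono
      intro t ht a
      exact ih (ht a)

lemma Dfil_le_of_le {m m' : ℕ} (h : m ≤ m') : Dfil k A L m ≤ Dfil k A L m' := by
  induction h with
  | refl => exact le_rfl
  | step _ ih => exact ih.trans (Dfil_mono _)

section Stmt8

variable {k : Type*} [Field k] {R : Type*} [CommRing R] [Algebra k R] {n : ℕ}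

/-- The component `φ_{(i,j),(p,q)}` of an operator `Φ` on the matrix algebra `M_n(R)`,
identifying `Hom_k(M_n(R), M_n(R))` with `n²×n²` matrices over `Hom_k(R,R)` via the
standard basis `E_{pq}` of `M_n(R)` over `R`. -/
def matrixEntryOp (Φ : Matrix (Fin n) (Fin n) R →ₗ[k] Matrix (Fin n) (Fin n) R)
    (i j p q : Fin n) : R →ₗ[k] R where
  toFun r := Φ (r • Matrix.single p q (1 : R)) i j
  map_add' r s := by simp [add_smul]
  map_smul' c r := by
    show Φ ((c • r) • _) i j = c • Φ (r • _) i j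
    rw [smul_assoc, map_smul, Matrix.smul_apply]

local notation "MR" => Matrix (Fin n) (Fin n) R

lemma matrixEntryOp_apply (Φ : MR →ₗ[k] MR) (i j p q : Fin n) (r : R) :
    matrixEntryOp Φ i j p q r = Φ (r • Matrix.single p q (1 : R)) i j := rfl

lemma matrixEntryOp_add (Φ Ψ : MR →ₗ[k] MR) (i j p q : Fin n) :
    matrixEntryOp (Φ + Ψ) i j p q = matrixEntryOp Φ i j p q + matrixEntryOp Ψ i j p q := by
  ext r; simp [matrixEntryOp_apply]

lemma matrixEntryOp_neg (Φ : MR →ₗ[k] MR) (i j p q : Fin n) :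
    matrixEntryOp (-Φ) i j p q = -(matrixEntryOp Φ i j p q) := by
  ext r; simp [matrixEntryOp_apply]

lemma matrixEntryOp_zero (i j p q : Fin n) :
    matrixEntryOp (0 : MR →ₗ[k] MR) i j p q = 0 := by
  ext r; simp [matrixEntryOp_apply]

lemma matrixEntryOp_sub (Φ Ψ : MR →ₗ[k] MR) (i j p q : Fin n) :
    matrixEntryOp (Φ - Ψ) i j p q = matrixEntryOp Φ i j p q - matrixEntryOp Ψ i j p q := by
  ext r; simp [matrixEntryOp_apply]

lemma matrixEntryOp_smulone_left (r : R) (Φ : MR →ₗ[k] MR) (i j p q : Fin n) :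
    matrixEntryOp ((lop k MR MR (r • 1)).comp Φ) i j p q
      = (lop k R R r).comp (matrixEntryOp Φ i j p q) := by
  ext s
  simp only [LinearMap.comp_apply, lop_apply, matrixEntryOp_apply, smul_eq_mul,
    smul_mul_assoc, one_mul, Matrix.smul_apply]

lemma matrixEntryOp_smulone_right (r : R) (Φ : MR →ₗ[k] MR) (i j p q : Fin n) :
    matrixEntryOp (Φ.comp (lop k MR MR (r • 1))) i j p q
      = (matrixEntryOp Φ i j p q).comp (lop k R R r) := by
  ext s
  have h : (r • (1 : MR)) • (s • Matrix.single p q (1 : R))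
      = (r * s) • Matrix.single p q (1 : R) := by
    rw [smul_eq_mul, smul_mul_assoc, one_mul, smul_smul]
  simp only [LinearMap.comp_apply, lop_apply, matrixEntryOp_apply, h, smul_eq_mul]

lemma mul_smul_stdBasis (b : MR) (s : R) (p q : Fin n) :
    b * (s • Matrix.single p q (1 : R))
      = ∑ p' : Fin n, (b p' p * s) • Matrix.single p' q (1 : R) := by
  ext x y
  simp only [Matrix.mul_apply, Matrix.smul_apply, Matrix.single, Matrix.of_apply,
    smul_eq_mul, mul_ite, mul_one, mul_zero, ite_and, Matrix.sum_apply]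
  rw [Finset.sum_ite_eq Finset.univ p (fun z => if q = y then b x z * s else 0)]
  rw [Finset.sum_ite_eq' Finset.univ x (fun p' => if q = y then b p' p * s else 0)]
  simp

lemma matrixEntryOp_conj (a b : MR) (t : MR →ₗ[k] MR) (i j p q : Fin n) :
    matrixEntryOp ((lop k MR MR a).comp (t.comp (lop k MR MR b))) i j p q
      = ∑ i' : Fin n, ∑ p' : Fin n,
          (lop k R R (a i i')).comp ((matrixEntryOp t i' j p' q).comp (lop k R R (b p' p))) := by
  ext s
  simp only [LinearMap.comp_apply, lop_apply, smul_eq_mul, matrixEntryOp_apply,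
    LinearMap.sum_apply]
  rw [mul_smul_stdBasis, map_sum, Matrix.mul_sum, Matrix.sum_apply]
  rw [Finset.sum_comm]
  refine Finset.sum_congr rfl fun i' _ => ?_
  rw [Matrix.mul_apply]

/-- The elementary operator `X ↦ ψ(X p q) • E_{ij}`. -/
def entryE (ψ : R →ₗ[k] R) (i j p q : Fin n) : MR →ₗ[k] MR where
  toFun X := ψ (X p q) • Matrix.single i j (1 : R)
  map_add' X Y := by simp [Matrix.add_apply, add_smul]
  map_smul' c X := by simp [Matrix.smul_apply, smul_assoc]

lemma entryE_apply (ψ : R →ₗ[k] R) (i j p q : Fin n) (X : MR) :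
    entryE ψ i j p q X = ψ (X p q) • Matrix.single i j (1 : R) := rfl

lemma entryE_add (ψ χ : R →ₗ[k] R) (i j p q : Fin n) :
    entryE (ψ + χ) i j p q = entryE ψ i j p q + entryE χ i j p q := by
  ext X : 1; simp [entryE_apply, add_smul]

lemma entryE_neg (ψ : R →ₗ[k] R) (i j p q : Fin n) :
    entryE (-ψ) i j p q = -(entryE ψ i j p q) := by
  ext X : 1; simp [entryE_apply]

lemma entryE_zero (i j p q : Fin n) : entryE (0 : R →ₗ[k] R) i j p q = 0 := by
  ext X : 1; simp [entryE_apply]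

/-- Entry-wise application of `ψ`. -/
def entD (ψ : R →ₗ[k] R) : MR →ₗ[k] MR where
  toFun X := Matrix.of fun a b => ψ (X a b)
  map_add' X Y := by ext a b; simp
  map_smul' c X := by ext a b; simp

lemma entD_apply (ψ : R →ₗ[k] R) (X : MR) (a b : Fin n) : entD ψ X a b = ψ (X a b) := rfl

/-- Right multiplication by `v` as a `k`-linear map. -/
def ropM (v : MR) : MR →ₗ[k] MR where
  toFun X := X * v
  map_add' X Y := add_mul X Y v
  map_smul' c X := by simp [smul_mul_assoc]

lemma ropM_apply (v X : MR) : ropM (k := k) v X = X * v := rfl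

lemma lop_ropM_comm (c v : MR) :
    (lop k MR MR c).comp (ropM v) = (ropM v).comp (lop k MR MR c) := by
  ext X : 1
  simp [ropM_apply, smul_eq_mul, mul_assoc]

lemma entryE_conj (r s : R) (ψ : R →ₗ[k] R) (i j p q : Fin n) :
    entryE ((lop k R R r).comp (ψ.comp (lop k R R s))) i j p q
      = (lop k MR MR (r • 1)).comp ((entryE ψ i j p q).comp (lop k MR MR (s • 1))) := by
  ext X : 1
  have h1 : (s • (1 : MR)) • X = s • X := by rw [smul_eq_mul, smul_mul_assoc, one_mul]
  simp only [LinearMap.comp_apply, lop_apply, entryE_apply, h1, Matrix.smul_apply,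
    smul_eq_mul, smul_mul_assoc, one_mul, smul_smul]

lemma entryE_eq (ψ : R →ₗ[k] R) (i j p q : Fin n) :
    entryE ψ i j p q
      = (lop k MR MR (Matrix.single i p (1 : R))).comp
          (((entD ψ).comp (ropM (Matrix.single q j (1 : R)))).comp
            (lop k MR MR 1)) := by
  ext X x y
  simp only [LinearMap.comp_apply, lop_apply, one_smul, entryE_apply, smul_eq_mul,
    ropM_apply, Matrix.smul_apply, Matrix.mul_apply, entD_apply, Matrix.single,
    Matrix.of_apply, smul_eq_mul, mul_ite, mul_one, mul_zero, ite_mul, one_mul, zero_mul,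
    ite_and]
  simp [Finset.sum_ite_irrel, Finset.sum_const_zero, Finset.sum_ite_eq, Finset.sum_ite_eq',
    apply_ite ψ]

lemma entD_comm {ψ : R →ₗ[k] R}
    (hψ : ∀ r : R, (lop k R R r).comp ψ = ψ.comp (lop k R R r)) (c X : MR) :
    c * entD ψ X = entD ψ (c * X) := by
  have hψ' : ∀ r t : R, r * ψ t = ψ (r * t) := fun r t =>
    congrFun (congrArg DFunLike.coe (hψ r)) t
  ext x y
  simp only [Matrix.mul_apply, entD_apply, map_sum]
  exact Finset.sum_congr rfl fun e _ => hψ' _ _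

lemma entD_commutator (ψ : R →ₗ[k] R) (c : MR) :
    (lop k MR MR c).comp (entD ψ) - (entD ψ).comp (lop k MR MR c)
      = ∑ x : Fin n, ∑ y : Fin n, ∑ e : Fin n,
          entryE ((lop k R R (c x e)).comp ψ - ψ.comp (lop k R R (c x e))) x y e y := by
  ext X a b
  simp only [LinearMap.sub_apply, LinearMap.comp_apply, lop_apply, smul_eq_mul,
    Matrix.sub_apply, Matrix.mul_apply, entD_apply, map_sum, LinearMap.sum_apply,
    Matrix.sum_apply, entryE_apply, Matrix.smul_apply, Matrix.single,
    Matrix.of_apply, mul_ite, mul_one, mul_zero, ite_and]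
  simp [Finset.sum_ite_irrel, Finset.sum_const_zero, Finset.sum_ite_eq, Finset.sum_ite_eq',
    Finset.sum_sub_distrib]

lemma eq_sum_entryE (Φ : MR →ₗ[k] MR) :
    Φ = ∑ i : Fin n, ∑ j : Fin n, ∑ p : Fin n, ∑ q : Fin n,
        entryE (matrixEntryOp Φ i j p q) i j p q := by
  ext X x y
  have hX : X = ∑ p : Fin n, ∑ q : Fin n, (X p q) • Matrix.single p q (1 : R) := by
    conv_lhs => rw [Matrix.matrix_eq_sum_single X]
    refine Finset.sum_congr rfl fun p _ => Finset.sum_congr rfl fun q _ => ?_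
    rw [Matrix.smul_single, smul_eq_mul, mul_one]
  conv_lhs => rw [hX]
  simp only [map_sum, LinearMap.sum_apply, Matrix.sum_apply, entryE_apply, matrixEntryOp_apply,
    Matrix.smul_apply, Matrix.single, Matrix.of_apply, smul_eq_mul, mul_ite, mul_one,
    mul_zero, ite_and]
  simp [Finset.sum_ite_irrel, Finset.sum_const_zero, Finset.sum_ite_eq, Finset.sum_ite_eq']

lemma forward_lemma (m : ℕ) : ∀ Φ : MR →ₗ[k] MR, Φ ∈ Dfil k MR MR m →
    ∀ i j p q : Fin n, matrixEntryOp Φ i j p q ∈ Dfil k R R m := by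
  induction m with
  | zero =>
      intro Φ hΦ i j p q
      rw [Dfil_zero] at hΦ
      refine genBi_induction
        (P := fun Ψ => matrixEntryOp Ψ i j p q ∈ Dfil k R R 0) ?_ ?_ ?_ ?_ Φ hΦ
      · intro a b t ht
        simp only [matrixEntryOp_conj]
        refine AddSubgroup.sum_mem _ fun i' _ => AddSubgroup.sum_mem _ fun p' _ => ?_
        refine Dfil_conj ?_ _ _
        rw [Dfil_zero]
        refine mem_genBi_self ?_
        intro r
        rw [← matrixEntryOp_smulone_left, ← matrixEntryOp_smulone_right, ht (r • 1)]
      · simp only [matrixEntryOp_zero]; exact zero_mem _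
      · intro x y hx hy
        simp only [matrixEntryOp_add]; exact add_mem hx hy
      · intro x hx
        simp only [matrixEntryOp_neg]; exact neg_mem hx
  | succ m ih =>
      intro Φ hΦ i j p q
      rw [Dfil_succ] at hΦ
      refine genBi_induction
        (P := fun Ψ => matrixEntryOp Ψ i j p q ∈ Dfil k R R (m+1)) ?_ ?_ ?_ ?_ Φ hΦ
      · intro a b t ht
        simp only [matrixEntryOp_conj]
        refine AddSubgroup.sum_mem _ fun i' _ => AddSubgroup.sum_mem _ fun p' _ => ?_
        refine Dfil_conj ?_ _ _
        rw [Dfil_succ]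
        refine mem_genBi_self ?_
        intro r
        rw [← matrixEntryOp_smulone_left, ← matrixEntryOp_smulone_right, ← matrixEntryOp_sub]
        exact ih _ (ht (r • 1)) _ _ _ _
      · simp only [matrixEntryOp_zero]; exact zero_mem _
      · intro x y hx hy
        simp only [matrixEntryOp_add]; exact add_mem hx hy
      · intro x hx
        simp only [matrixEntryOp_neg]; exact neg_mem hx

lemma backward_lemma (m : ℕ) : ∀ ψ : R →ₗ[k] R, ψ ∈ Dfil k R R m →
    ∀ i j p q : Fin n, entryE ψ i j p q ∈ Dfil k MR MR m := by
  induction m with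
  | zero =>
      intro ψ hψ i j p q
      rw [Dfil_zero] at hψ
      refine genBi_induction
        (P := fun χ => entryE χ i j p q ∈ Dfil k MR MR 0) ?_ ?_ ?_ ?_ ψ hψ
      · intro r s ψ₀ ht
        simp only [entryE_conj]
        refine Dfil_conj ?_ _ _
        rw [entryE_eq, Dfil_zero]
        refine mem_genBi_of_mem ?_ _ _
        intro c
        ext X : 1
        simp only [LinearMap.comp_apply, lop_apply, smul_eq_mul, ropM_apply]
        rw [entD_comm ht, mul_assoc]
      · simp only [entryE_zero]; exact zero_mem _
      · intro x y hx hy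
        simp only [entryE_add]; exact add_mem hx hy
      · intro x hx
        simp only [entryE_neg]; exact neg_mem hx
  | succ m ih =>
      intro ψ hψ i j p q
      rw [Dfil_succ] at hψ
      refine genBi_induction
        (P := fun χ => entryE χ i j p q ∈ Dfil k MR MR (m+1)) ?_ ?_ ?_ ?_ ψ hψ
      · intro r s ψ₀ ht
        simp only [entryE_conj]
        refine Dfil_conj ?_ _ _
        rw [entryE_eq, Dfil_succ]
        refine mem_genBi_of_mem ?_ _ _
        intro c
        have h1 : (lop k MR MR c).comp ((entD ψ₀).comp (ropM (Matrix.single q j 1)))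
            - ((entD ψ₀).comp (ropM (Matrix.single q j 1))).comp (lop k MR MR c)
            = ((lop k MR MR c).comp (entD ψ₀)
                - (entD ψ₀).comp (lop k MR MR c)).comp
                  (ropM (Matrix.single q j 1)) := by
          ext X : 1
          simp only [LinearMap.sub_apply, LinearMap.comp_apply, lop_apply, smul_eq_mul,
            ropM_apply]
          rw [mul_assoc]
        rw [h1]
        refine Dfil_comp_central m (fun a => (lop_ropM_comm a _)) ?_
        rw [entD_commutator]
        refine AddSubgroup.sum_mem _ fun x _ => AddSubgroup.sum_mem _ fun y _ =>
          AddSubgroup.sum_mem _ fun e _ => ?_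
        exact ih _ (ht (c x e)) _ _ _ _
      · simp only [entryE_zero]; exact zero_mem _
      · intro x y hx hy
        simp only [entryE_add]; exact add_mem hx hy
      · intro x hx
        simp only [entryE_neg]; exact neg_mem hx

/-- `D^m_k(M_n(R)) = M_{n²}(D^m_k(R))` for every `m`, and hence
`D_k(M_n(R)) = M_{n²}(D_k(R))`: an operator on `M_n(R)` is a differential operator of
order `≤ m` iff all its `n² × n²` components lie in `D^m_k(R)`. -/
theorem Dfil_matrix_eq_matrix_Dfil
    (Φ : Matrix (Fin n) (Fin n) R →ₗ[k] Matrix (Fin n) (Fin n) R) :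
    (∀ m : ℕ, Φ ∈ Dfil k (Matrix (Fin n) (Fin n) R) (Matrix (Fin n) (Fin n) R) m ↔
      ∀ i j p q, matrixEntryOp Φ i j p q ∈ Dfil k R R m) ∧
    (Φ ∈ Ddiff k (Matrix (Fin n) (Fin n) R) (Matrix (Fin n) (Fin n) R) ↔
      ∀ i j p q, matrixEntryOp Φ i j p q ∈ Ddiff k R R) := by
  have hbwd : ∀ m : ℕ, (∀ i j p q, matrixEntryOp Φ i j p q ∈ Dfil k R R m) →
      Φ ∈ Dfil k MR MR m := by
    intro m h
    rw [eq_sum_entryE Φ]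
    exact AddSubgroup.sum_mem _ fun i _ => AddSubgroup.sum_mem _ fun j _ =>
      AddSubgroup.sum_mem _ fun p _ => AddSubgroup.sum_mem _ fun q _ =>
        backward_lemma m _ (h i j p q) i j p q
  constructor
  · intro m
    exact ⟨fun h i j p q => forward_lemma m Φ h i j p q, hbwd m⟩
  · constructor
    · intro hΦ i j p q
      obtain ⟨m, hm⟩ := Set.mem_iUnion.mp hΦ
      exact Set.mem_iUnion.mpr ⟨m, forward_lemma m Φ hm i j p q⟩
    · intro h
      have h' : ∀ i j p q : Fin n, ∃ m, matrixEntryOp Φ i j p q ∈ Dfil k R R m :=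
        fun i j p q => Set.mem_iUnion.mp (h i j p q)
      choose f hf using h'
      set m0 : ℕ := Finset.univ.sup
        (fun x : Fin n × Fin n × Fin n × Fin n => f x.1 x.2.1 x.2.2.1 x.2.2.2) with hm0
      refine Set.mem_iUnion.mpr ⟨m0, ?_⟩
      refine hbwd m0 fun i j p q => ?_
      refine Dfil_le_of_le ?_ (hf i j p q)
      exact Finset.le_sup (f := fun x : Fin n × Fin n × Fin n × Fin n =>
        f x.1 x.2.1 x.2.2.1 x.2.2.2) (Finset.mem_univ (i, j, p, q))

end Stmt8
end

section
/- Let A be Azumaya over commutative Noetherian R with dual basis {b_i, f_i}. For φ ∈ Hom_k(R,R), the extension φ̄ = Σ_i ρ_{b_i}∘φ∘f_i satisfies (s·φ·r)‾ = s·φ̄·r for all r,s ∈ R; consequently if φ ∈ D^m_k(R) then φ̄ ∈ D^m_k(_R A), and since φ̄|_R = φ, the map φ ↦ φ̄ is an injective R-bimodule map D^m_k(R) → D^m_k(_R A). -/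
open MulOpposite

variable (k : Type*) [Field k]
variable (A : Type*) [Ring A] [Algebra k A]
variable (L : Type*) [AddCommGroup L] [Module k L] [Module A L] [SMulCommClass A k L]

open TensorProduct MulOpposite in
/-- The Azumaya condition for an `R`-algebra `A`: finitely generated, projective and
faithful as an `R`-module, `R·1` is the center of `A`, and the canonical map
`A ⊗_R A^op → End_R(A)`, `a ⊗ b^op ↦ (c ↦ a c b)`, is bijective (here recorded as the
existence of a linear equivalence realizing this map). -/
structure IsAzumayaAlg (R A : Type*) [CommRing R] [Ring A] [Algebra R A] : Prop where
  finite : Module.Finite R A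
  projective : Module.Projective R A
  faithful : FaithfulSMul R A
  center_le : ∀ a : A, (∀ b : A, a * b = b * a) → ∃ r : R, algebraMap R A r = a
  bij : ∃ e : (A ⊗[R] Aᵐᵒᵖ) ≃ₗ[R] (A →ₗ[R] A),
      ∀ (a b x : A), e (a ⊗ₜ[R] op b) x = a * x * b

section DualBasis

variable (k R A : Type*) [Field k] [CommRing R] [Algebra k R] [Ring A] [Algebra R A]
  [Algebra k A] [IsScalarTower k R A] [SMulCommClass R k A] {n : ℕ}

/-- The extension `φ̄ = Σ_i ρ_{b_i} ∘ φ ∘ f_i ∈ Hom_k(A,A)` of an operator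
`φ ∈ Hom_k(R,R)`, relative to a dual basis `{b_i, f_i}` of the `R`-module `A`. -/
noncomputable def extOp (b : Fin (n + 1) → A) (f : Fin (n + 1) → (A →ₗ[R] R))
    (φ : R →ₗ[k] R) : A →ₗ[k] A :=
  ∑ i, (LinearMap.mulRight k (b i)).comp
    (((Algebra.linearMap R A).restrictScalars k).comp (φ.comp ((f i).restrictScalars k)))

end DualBasis

section AuxLemmas

variable (k R A : Type*) [Field k] [CommRing R] [Algebra k R] [Ring A] [Algebra R A]
  [Algebra k A] [IsScalarTower k R A] [SMulCommClass R k A] {n : ℕ}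
variable (b : Fin (n + 1) → A) (f : Fin (n + 1) → (A →ₗ[R] R))

lemma extOp_apply (φ : R →ₗ[k] R) (a : A) :
    extOp k R A b f φ a = ∑ i, algebraMap R A (φ (f i a)) * b i := by
  simp [extOp]

lemma extOp_add (φ ψ : R →ₗ[k] R) :
    extOp k R A b f (φ + ψ) = extOp k R A b f φ + extOp k R A b f ψ := by
  ext a; simp [extOp_apply, add_mul, Finset.sum_add_distrib]

lemma extOp_neg (φ : R →ₗ[k] R) :
    extOp k R A b f (-φ) = -extOp k R A b f φ := by
  ext a; simp [extOp_apply, neg_mul]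

lemma extOp_zero : extOp k R A b f (0 : R →ₗ[k] R) = 0 := by
  ext a; simp [extOp_apply]

lemma extOp_sub (φ ψ : R →ₗ[k] R) :
    extOp k R A b f (φ - ψ) = extOp k R A b f φ - extOp k R A b f ψ := by
  rw [sub_eq_add_neg, extOp_add, extOp_neg, sub_eq_add_neg]

lemma lop_one' : lop k R A (1 : R) = LinearMap.id := by
  ext x; simp [lop]

lemma extOp_comp (r s : R) (φ : R →ₗ[k] R) :
    extOp k R A b f ((lop k R R s).comp (φ.comp (lop k R R r))) =
      (lop k R A s).comp ((extOp k R A b f φ).comp (lop k R A r)) := by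
  ext a
  simp only [LinearMap.comp_apply, extOp_apply, lop, LinearMap.coe_mk, AddHom.coe_mk]
  rw [Finset.smul_sum]
  refine Finset.sum_congr rfl fun i _ => ?_
  rw [map_smul (f i), smul_eq_mul, smul_eq_mul, ← smul_mul_assoc, Algebra.smul_def, ← map_mul]

lemma extOp_comp_left (s : R) (φ : R →ₗ[k] R) :
    extOp k R A b f ((lop k R R s).comp φ) = (lop k R A s).comp (extOp k R A b f φ) := by
  have h := extOp_comp k R A b f 1 s φ
  rwa [lop_one', lop_one', LinearMap.comp_id, LinearMap.comp_id] at h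

lemma extOp_comp_right (r : R) (φ : R →ₗ[k] R) :
    extOp k R A b f (φ.comp (lop k R R r)) = (extOp k R A b f φ).comp (lop k R A r) := by
  have h := extOp_comp k R A b f r 1 φ
  rwa [lop_one', lop_one', LinearMap.id_comp, LinearMap.id_comp] at h

lemma extOp_genBi (T : Set (R →ₗ[k] R)) (T' : Set (A →ₗ[k] A))
    (h : ∀ t ∈ T, extOp k R A b f t ∈ T') {φ : R →ₗ[k] R}
    (hφ : φ ∈ genBi k R R T) : extOp k R A b f φ ∈ genBi k R A T' := by
  refine AddSubgroup.closure_induction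
    (p := fun ψ _ => extOp k R A b f ψ ∈ genBi k R A T') ?_ ?_ ?_ ?_ hφ
  · rintro ψ ⟨s, r, t, ht, rfl⟩
    rw [extOp_comp]
    exact AddSubgroup.subset_closure ⟨s, r, _, h t ht, rfl⟩
  · show extOp k R A b f 0 ∈ genBi k R A T'
    rw [extOp_zero]; exact zero_mem _
  · intro x y _ _ hx hy
    show extOp k R A b f (x + y) ∈ genBi k R A T'
    rw [extOp_add]; exact add_mem hx hy
  · intro x _ hx
    show extOp k R A b f (-x) ∈ genBi k R A T'
    rw [extOp_neg]; exact neg_mem hx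

lemma extOp_dfil (m : ℕ) (φ : R →ₗ[k] R) (hφ : φ ∈ Dfil k R R m) :
    extOp k R A b f φ ∈ Dfil k R A m := by
  induction m generalizing φ with
  | zero =>
      refine extOp_genBi k R A b f _ _ (fun t ht => ?_) hφ
      intro r
      rw [extOp_comp_left k R A b f r t |>.symm, ht r, extOp_comp_right]
  | succ m ih =>
      refine extOp_genBi k R A b f _ _ (fun t ht => ?_) hφ
      intro r
      have : (lop k R A r).comp (extOp k R A b f t) -
          (extOp k R A b f t).comp (lop k R A r) =
          extOp k R A b f ((lop k R R r).comp t - t.comp (lop k R R r)) := by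
        rw [extOp_sub, extOp_comp_left, extOp_comp_right]
      rw [this]
      exact ih _ (ht r)

lemma extOp_algebraMap (hb0 : b 0 = 1)
    (hf0 : ∀ r : R, f 0 (algebraMap R A r) = r)
    (hfi : ∀ i, i ≠ 0 → ∀ r : R, f i (algebraMap R A r) = 0)
    (φ : R →ₗ[k] R) (r : R) :
    extOp k R A b f φ (algebraMap R A r) = algebraMap R A (φ r) := by
  rw [extOp_apply, Finset.sum_eq_single 0]
  · rw [hf0, hb0, mul_one]
  · intro i _ hi
    rw [hfi i hi, map_zero, map_zero, zero_mul]
  · simp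

end AuxLemmas

/-- For an Azumaya algebra `A` over a commutative Noetherian `k`-algebra `R` with dual
basis `{b_i, f_i}`, the extension `φ ↦ φ̄` satisfies `(s·φ·r)‾ = s·φ̄·r` for `r, s ∈ R`;
consequently `φ ∈ D^m_k(R)` implies `φ̄ ∈ D^m_k(_R A)`; moreover `φ̄` restricts to `φ` on
`R`, so `φ ↦ φ̄` is an injective `R`-bimodule map `D^m_k(R) → D^m_k(_R A)`. -/
theorem extOp_bimodule_injective (k R A : Type*) [Field k] [CommRing R] [Algebra k R]
    [IsNoetherianRing R] [Ring A] [Algebra R A] [Algebra k A] [IsScalarTower k R A]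
    [SMulCommClass R k A] (hAz : IsAzumayaAlg R A) {n : ℕ} (b : Fin (n + 1) → A)
    (f : Fin (n + 1) → (A →ₗ[R] R))
    (hdb : ∀ a : A, ∑ i, f i a • b i = a) (hb0 : b 0 = 1)
    (hf0 : ∀ r : R, f 0 (algebraMap R A r) = r)
    (hfi : ∀ i, i ≠ 0 → ∀ r : R, f i (algebraMap R A r) = 0) :
    (∀ (r s : R) (φ : R →ₗ[k] R),
        extOp k R A b f ((lop k R R s).comp (φ.comp (lop k R R r))) =
          (lop k R A s).comp ((extOp k R A b f φ).comp (lop k R A r))) ∧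
    (∀ (m : ℕ) (φ : R →ₗ[k] R), φ ∈ Dfil k R R m → extOp k R A b f φ ∈ Dfil k R A m) ∧
    (∀ (φ : R →ₗ[k] R) (r : R),
        extOp k R A b f φ (algebraMap R A r) = algebraMap R A (φ r)) ∧
    Function.Injective (extOp k R A b f) := by
  haveI := hAz.faithful
  have hinj : Function.Injective (algebraMap R A) := fun r s h => by
    refine eq_of_smul_eq_smul (M := R) (α := A) fun a => ?_
    rw [Algebra.smul_def, Algebra.smul_def, h]
  refine ⟨extOp_comp k R A b f, extOp_dfil k R A b f,
    extOp_algebraMap k R A b f hb0 hf0 hfi, fun φ ψ h => ?_⟩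
  ext r
  apply hinj
  rw [← extOp_algebraMap k R A b f hb0 hf0 hfi φ r,
    ← extOp_algebraMap k R A b f hb0 hf0 hfi ψ r, h]
end
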